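/- Let σ > 0 and β ∈ (0,1]. Define x̄(y) = (σ/√2)·√((y/σ)² − 1 − β + √(((y/σ)² − 1 − β)² − 4β)) for y ≥ σ·(1+√β). Then for every x ≥ σ·β^{1/4}, one has y(x) ≥ σ·(1+√β) and x̄(y(x)) = x; i.e., x̄ inverts the map x ↦ y(x) on [σ·β^{1/4}, ∞). -/

import Mathlib

/-- For `σ > 0` and `β ∈ (0,1]`, define
`x̄(y) = (σ/√2)·√((y/σ)² − 1 − β + √(((y/σ)² − 1 − β)² − 4β))`. Then for every
`x ≥ σ·β^{1/4}` one has `y(x) ≥ σ·(1+√β)` and `x̄(y(x)) = x`, where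
`y(x) = σ·√((x/σ + σ/x)(x/σ + βσ/x))`. -/
theorem xbar_inverts_y (σ β : ℝ) (hσ : 0 < σ) (hβ0 : 0 < β) (hβ1 : β ≤ 1)
    (xbar : ℝ → ℝ)
    (hxbar : ∀ y : ℝ, σ * (1 + Real.sqrt β) ≤ y →
      xbar y = σ / Real.sqrt 2 * Real.sqrt ((y / σ) ^ 2 - 1 - β +
        Real.sqrt (((y / σ) ^ 2 - 1 - β) ^ 2 - 4 * β)))
    (yfun : ℝ → ℝ)
    (hyfun : ∀ x : ℝ, yfun x = σ * Real.sqrt ((x / σ + σ / x) * (x / σ + β * σ / x))) :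
    ∀ x : ℝ, σ * β ^ ((1 : ℝ) / 4) ≤ x →
      σ * (1 + Real.sqrt β) ≤ yfun x ∧ xbar (yfun x) = x := by
  intro x hx
  have hb4 : (0:ℝ) < β ^ ((1:ℝ)/4) := Real.rpow_pos_of_pos hβ0 _
  have hx0 : 0 < x := lt_of_lt_of_le (by positivity) hx
  set t := x / σ with ht
  have ht0 : 0 < t := div_pos hx0 hσ
  have hsb : Real.sqrt β ^ 2 = β := Real.sq_sqrt hβ0.le
  have hsb0 : 0 ≤ Real.sqrt β := Real.sqrt_nonneg β
  -- t ≥ β^{1/4}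
  have htb : β ^ ((1:ℝ)/4) ≤ t := by
    rw [ht, le_div_iff₀ hσ]
    linarith [hx]
  have hb4pow : (β ^ ((1:ℝ)/4)) ^ (4:ℕ) = β := by
    rw [← Real.rpow_natCast (β ^ ((1:ℝ)/4)) 4, ← Real.rpow_mul hβ0.le]
    norm_num
  have ht4 : β ≤ t ^ 4 := by
    calc β = (β ^ ((1:ℝ)/4)) ^ (4:ℕ) := hb4pow.symm
    _ ≤ t ^ 4 := by
        apply pow_le_pow_left₀ hb4.le htb
  -- key algebraic identity for the product
  have hP : (x / σ + σ / x) * (x / σ + β * σ / x) = t^2 + β/t^2 + 1 + β := by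
    rw [ht]
    field_simp
    ring
  set P := t^2 + β/t^2 + 1 + β with hPd
  have hPge : (1 + Real.sqrt β)^2 ≤ P := by
    rw [hPd]
    have h1 : 2 * Real.sqrt β ≤ t^2 + β/t^2 := by
      have key : (t^2 - Real.sqrt β)^2 / t^2 = t^2 + Real.sqrt β^2/t^2 - 2*Real.sqrt β := by
        field_simp
        ring
      rw [hsb] at key
      nlinarith [div_nonneg (sq_nonneg (t^2 - Real.sqrt β)) (sq_nonneg t), key]
    nlinarith [hsb]
  have hP0 : 0 ≤ P := le_trans (by positivity) hPge
  have hsPge : 1 + Real.sqrt β ≤ Real.sqrt P := by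
    have := Real.sqrt_le_sqrt hPge
    rwa [Real.sqrt_sq (by positivity)] at this
  have hy : yfun x = σ * Real.sqrt P := by rw [hyfun x, hP]
  have hyge : σ * (1 + Real.sqrt β) ≤ yfun x := by
    rw [hy]
    exact mul_le_mul_of_nonneg_left hsPge hσ.le
  refine ⟨hyge, ?_⟩
  rw [hxbar _ hyge, hy]
  have hyσ : σ * Real.sqrt P / σ = Real.sqrt P := by field_simp
  rw [hyσ, Real.sq_sqrt hP0]
  -- A := P - 1 - β = t² + β/t²
  have hA : P - 1 - β = t^2 + β/t^2 := by rw [hPd]; ring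
  have hB0 : 0 ≤ t^2 - β/t^2 := by
    rw [sub_nonneg, div_le_iff₀ (by positivity : (0:ℝ) < t^2)]
    nlinarith [ht4]
  have hAsq : (P - 1 - β)^2 - 4*β = (t^2 - β/t^2)^2 := by
    rw [hA]
    field_simp
    ring
  rw [hAsq, Real.sqrt_sq hB0, hA]
  have h2t : t^2 + β/t^2 + (t^2 - β/t^2) = 2 * t^2 := by ring
  rw [h2t]
  have : Real.sqrt (2 * t^2) = Real.sqrt 2 * t := by
    rw [Real.sqrt_mul (by norm_num), Real.sqrt_sq ht0.le]
  rw [this]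
  have h2 : Real.sqrt 2 ≠ 0 := by positivity
  field_simp [ht]
  rw [ht]; field_simp
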